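/- arXiv:2006.14053 — 6 statements merged into one kernel-verified Lean document; each statement's English description precedes it below -/
import Mathlib

section
/- Let G be a locally compact Hausdorff topological group and X a Tychonoff G-space. Then X is a proper G-space in the sense of Palais if and only if X is a Cartan G-space and the orbit space X/G is regular. In particular, every proper G-space is a Cartan G-space. -/
open Pointwise


/-- A subset `S` of a `G`-space `X` is small (in the sense of Palais). -/
def IsSmallSet (G : Type*) {X : Type*} [SMul G X] [TopologicalSpace G] [TopologicalSpace X]
    (S : Set X) : Prop :=
  ∀ x : X, ∃ V ∈ nhds x, IsCompact (closure {g : G | ∃ s ∈ S, g • s ∈ V})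

/-- A `G`-space `X` is proper in the sense of Palais: it has an open cover consisting of
small sets. -/
def PalaisProper (G X : Type*) [SMul G X] [TopologicalSpace G] [TopologicalSpace X] : Prop :=
  ∃ 𝒰 : Set (Set X), (∀ U ∈ 𝒰, IsOpen U) ∧ ⋃₀ 𝒰 = Set.univ ∧ ∀ U ∈ 𝒰, IsSmallSet G U

/-- A `G`-space `X` is a Cartan `G`-space: every point has a thin neighborhood `V`, i.e. one
such that `{g : G | gV ∩ V ≠ ∅}` has compact closure in `G`. -/
def IsCartan (G X : Type*) [SMul G X] [TopologicalSpace G] [TopologicalSpace X] : Prop :=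
  ∀ x : X, ∃ V ∈ nhds x, IsCompact (closure {g : G | ∃ v ∈ V, g • v ∈ V})

section Aux

variable {G X : Type*} [Group G] [TopologicalSpace G] [IsTopologicalGroup G]
    [TopologicalSpace X] [MulAction G X] [ContinuousSMul G X]

/-- If `C` is closed and small, then its saturation `G • C` is closed. -/
theorem aux_isClosed_saturation {C : Set X} (hC : IsClosed C) (hsm : IsSmallSet G C) :
    IsClosed (⋃ g : G, g • C) := by
  refine isClosed_of_closure_subset fun y hy => ?_
  obtain ⟨V, hV, hK⟩ := hsm y
  set K : Set G := closure {g : G | ∃ s ∈ C, g • s ∈ V} with hKdef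
  have hsub : (⋃ g : G, g • C) ∩ V ⊆ K • C := by
    rintro z ⟨hz1, hz2⟩
    obtain ⟨_, ⟨g, rfl⟩, c, hc, rfl⟩ := hz1
    exact ⟨g, subset_closure ⟨c, hc, hz2⟩, c, hc, rfl⟩
  have hKC : IsClosed (K • C) := hC.smul_left_of_isCompact hK
  have hy2 : y ∈ closure ((⋃ g : G, g • C) ∩ V) := by
    rw [mem_closure_iff_nhds] at hy ⊢
    intro t ht
    obtain ⟨z, hz1, hz2⟩ := hy (t ∩ V) (Filter.inter_mem ht hV)
    exact ⟨z, hz1.1, hz2, hz1.2⟩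
  have : y ∈ K • C := hKC.closure_subset ((closure_mono hsub) hy2)
  obtain ⟨g, _, c, hc, rfl⟩ := this
  exact Set.mem_iUnion.2 ⟨g, c, hc, rfl⟩

end Aux

/-- For a locally compact Hausdorff group `G` and a Tychonoff `G`-space `X`,
`X` is a proper `G`-space in the sense of Palais iff `X` is a Cartan `G`-space and the orbit
space `X/G` is regular. (In particular every proper `G`-space is Cartan.) -/
theorem statement3 {G X : Type*} [Group G] [TopologicalSpace G] [IsTopologicalGroup G]
    [LocallyCompactSpace G] [T2Space G]
    [TopologicalSpace X] [MulAction G X] [ContinuousSMul G X] [T35Space X] :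
    PalaisProper G X ↔
      (IsCartan G X ∧ RegularSpace (Quotient (MulAction.orbitRel G X))) := by
  letI R := MulAction.orbitRel G X
  set π : X → Quotient R := Quotient.mk' with hπdef
  have hπcont : Continuous π := continuous_quotient_mk'
  have hπopen : IsOpenMap π := isOpenMap_quotient_mk'_mul
  have hπeq : ∀ (g : G) (x : X), π (g • x) = π x := fun g x =>
    Quotient.sound' (MulAction.mem_orbit x g)
  constructor
  · rintro ⟨𝒰, hopen, hcov, hsmall⟩
    have hmem : ∀ x : X, ∃ U ∈ 𝒰, x ∈ U := by
      intro x
      have : x ∈ ⋃₀ 𝒰 := hcov ▸ Set.mem_univ x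
      obtain ⟨U, hU, hxU⟩ := this
      exact ⟨U, hU, hxU⟩
    constructor
    · -- Cartan
      intro x
      obtain ⟨U, hU, hxU⟩ := hmem x
      obtain ⟨V, hV, hK⟩ := hsmall U hU x
      refine ⟨U ∩ V, Filter.inter_mem ((hopen U hU).mem_nhds hxU) hV, ?_⟩
      refine hK.of_isClosed_subset isClosed_closure (closure_mono ?_)
      rintro g ⟨v, ⟨hv1, _⟩, hgv⟩
      exact ⟨v, hv1, hgv.2⟩
    · -- regularity of the orbit space
      refine RegularSpace.of_exists_mem_nhds_isClosed_subset fun q s hs => ?_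
      obtain ⟨x, rfl⟩ := Quotient.exists_rep q
      have hxs : (Quotient.mk R x : Quotient R) = π x := rfl
      rw [hxs] at hs ⊢
      obtain ⟨S, hS, hxS⟩ := hmem x
      have hUsat : IsOpen (π ⁻¹' interior s) := isOpen_interior.preimage hπcont
      have hxU : x ∈ π ⁻¹' interior s := mem_interior_iff_mem_nhds.2 hs
      obtain ⟨C, hCnhds, hCclosed, hCsub⟩ :=
        exists_mem_nhds_isClosed_subset (Filter.inter_mem (hUsat.mem_nhds hxU)
          ((hopen S hS).mem_nhds hxS))
      have hCsmall : IsSmallSet G C := by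
        intro y
        obtain ⟨V, hV, hK⟩ := hsmall S hS y
        refine ⟨V, hV, hK.of_isClosed_subset isClosed_closure (closure_mono ?_)⟩
        rintro g ⟨c, hc, hgc⟩
        exact ⟨c, (hCsub hc).2, hgc⟩
      have hGC : IsClosed (⋃ g : G, g • C) := aux_isClosed_saturation hCclosed hCsmall
      refine ⟨π '' C, ?_, ?_, ?_⟩
      · -- neighborhood
        exact Filter.mem_of_superset
          ((hπopen _ isOpen_interior).mem_nhds ⟨x, mem_interior_iff_mem_nhds.2 hCnhds, rfl⟩)
          (Set.image_mono interior_subset)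
      · -- closed
        rw [← isQuotientMap_quotient_mk'.isClosed_preimage]
        have : π ⁻¹' (π '' C) = ⋃ g : G, (g • ·) '' C :=
          MulAction.quotient_preimage_image_eq_union_mul C
        rw [hπdef, this]
        simpa only [← Set.image_smul] using hGC
      · rintro _ ⟨c, hc, rfl⟩
        exact interior_subset (hCsub hc).1
  · rintro ⟨hCartan, hreg⟩
    haveI := hreg
    refine ⟨{U | IsOpen U ∧ IsSmallSet G U}, fun U hU => hU.1, ?_, fun U hU => hU.2⟩
    rw [Set.eq_univ_iff_forall]
    intro x
    obtain ⟨V, hV, hT⟩ := hCartan x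
    set T₀ : Set G := {g : G | ∃ v ∈ V, g • v ∈ V} with hT₀def
    have hxV : x ∈ interior V := mem_interior_iff_mem_nhds.2 hV
    obtain ⟨C, hCnhds, hCclosed, hCsub⟩ :=
      exists_mem_nhds_isClosed_subset ((hπopen _ isOpen_interior).mem_nhds ⟨x, hxV, rfl⟩)
    set U : Set X := interior V ∩ π ⁻¹' interior C with hUdef
    have hUopen : IsOpen U := isOpen_interior.inter (isOpen_interior.preimage hπcont)
    have hxUmem : x ∈ U := ⟨hxV, mem_interior_iff_mem_nhds.2 hCnhds⟩
    refine Set.mem_sUnion.2 ⟨U, ⟨hUopen, ?_⟩, hxUmem⟩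
    -- U is small
    intro y
    by_cases hy : π y ∈ C
    · -- y is in the saturation of interior V
      obtain ⟨v, hvV, hvy⟩ := hCsub hy
      obtain ⟨g₀, hg₀⟩ := MulAction.mem_orbit_iff.1 (Quotient.exact' hvy)
      -- g₀ • y = v
      refine ⟨g₀⁻¹ • interior V, ?_, ?_⟩
      · refine (isOpen_interior.smul g₀⁻¹).mem_nhds ?_
        exact ⟨v, hvV, by simp [← hg₀]⟩
      · have hsub : {g : G | ∃ s ∈ U, g • s ∈ g₀⁻¹ • interior V} ⊆ g₀⁻¹ • closure T₀ := by
          rintro g ⟨s, hsU, hgs⟩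
          obtain ⟨w, hw, hw'⟩ := hgs
          have hmul : (g₀ * g) • s ∈ V := by
            have : g₀ • g • s = w := by rw [← hw', smul_inv_smul]
            rw [mul_smul, this]; exact interior_subset hw
          refine ⟨g₀ * g, subset_closure ⟨s, interior_subset hsU.1, hmul⟩, ?_⟩
          simp [smul_eq_mul, mul_assoc]
        have hcl : IsClosed (g₀⁻¹ • closure T₀) := isClosed_closure.smul g₀⁻¹
        have hcp : IsCompact (g₀⁻¹ • closure T₀) := hT.smul g₀⁻¹
        exact hcp.of_isClosed_subset isClosed_closure (closure_minimal hsub hcl)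
    · -- y's orbit misses C
      refine ⟨π ⁻¹' Cᶜ, (hCclosed.isOpen_compl.preimage hπcont).mem_nhds hy, ?_⟩
      have : {g : G | ∃ s ∈ U, g • s ∈ π ⁻¹' Cᶜ} = ∅ := by
        rw [Set.eq_empty_iff_forall_notMem]
        rintro g ⟨s, hsU, hgs⟩
        exact hgs (by rw [Set.mem_preimage, hπeq] at *; exact interior_subset hsU.2)
      rw [this, closure_empty]
      exact isCompact_empty
end

section
/- Let G be a locally compact Hausdorff topological group and X a Tychonoff G-space which is a Cartan G-space. Then for every x ∈ X: (1) the map g ↦ gx is an open map from G onto the orbit G(x) (with its subspace topology); (2) the orbit G(x) is closed in X, the stabilizer G_x is compact, and G(x) is G-homeomorphic to the coset space G/G_x, i.e., there is a G-equivariant homeomorphism from G/G_x onto G(x). -/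
open Filter Topology Set MulAction

section Aux

variable {G X : Type*} [Group G] [TopologicalSpace G] [IsTopologicalGroup G]
    [TopologicalSpace X] [MulAction G X] [ContinuousSMul G X]

/-- Key openness lemma for Cartan actions. -/
theorem cartan_orbitMap_isOpenMap [T2Space X] (hC : IsCartan G X) (x : X) :
    IsOpenMap (fun g : G => (⟨g • x, MulAction.mem_orbit x g⟩ : MulAction.orbit G x)) := by
  classical
  set φ : G → orbit G x := fun g => ⟨g • x, mem_orbit x g⟩ with hφdef
  have hσ : ∀ z : orbit G x, (mem_orbit_iff.mp z.2).choose • x = (z : X) :=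
    fun z => (mem_orbit_iff.mp z.2).choose_spec
  set σ : orbit G x → G := fun z => (mem_orbit_iff.mp z.2).choose with hσdef
  apply IsOpenMap.of_nhds_le
  intro g₀
  have key : ∀ S ∈ 𝓝 g₀, φ '' S ∈ 𝓝 (φ g₀) := by
    intro S hS
    by_contra hmem
    have hne : (𝓝 (φ g₀) ⊓ 𝓟 (φ '' S)ᶜ).NeBot := by
      refine ⟨fun h => hmem ?_⟩
      have := inf_principal_eq_bot.mp h
      rwa [compl_compl] at this
    set 𝒰 : Ultrafilter (orbit G x) := Ultrafilter.of (𝓝 (φ g₀) ⊓ 𝓟 (φ '' S)ᶜ) with h𝒰def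
    have h𝒰 : (𝒰 : Filter (orbit G x)) ≤ 𝓝 (φ g₀) ⊓ 𝓟 (φ '' S)ᶜ := Ultrafilter.of_le _
    have h1 : (𝒰 : Filter (orbit G x)) ≤ 𝓝 (φ g₀) := h𝒰.trans inf_le_left
    have h2 : (φ '' S)ᶜ ∈ 𝒰 := le_principal_iff.mp (h𝒰.trans inf_le_right)
    obtain ⟨V, hV, hK⟩ := hC (g₀ • x)
    have hcoe : Tendsto (Subtype.val : orbit G x → X) 𝒰 (𝓝 (g₀ • x)) :=
      (continuous_subtype_val.tendsto (φ g₀)).mono_left h1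
    have hVmem : {z : orbit G x | (z : X) ∈ V} ∈ 𝒰 := hcoe hV
    have hsub : ∀ z : orbit G x, (z : X) ∈ V →
        (σ z * g₀⁻¹) ∈ {g : G | ∃ v ∈ V, g • v ∈ V} := by
      intro z hz
      refine ⟨g₀ • x, mem_of_mem_nhds hV, ?_⟩
      rw [mul_smul, inv_smul_smul, hσ]
      exact hz
    have hKmem : closure {g : G | ∃ v ∈ V, g • v ∈ V} ∈
        Ultrafilter.map (fun z => σ z * g₀⁻¹) 𝒰 := by
      rw [Ultrafilter.mem_map]
      refine mem_of_superset hVmem ?_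
      intro z hz
      exact subset_closure (hsub z hz)
    obtain ⟨h, hhK, hconv⟩ := hK.ultrafilter_le_nhds _ (le_principal_iff.mpr hKmem)
    have htend : Tendsto (fun z : orbit G x => σ z * g₀⁻¹) 𝒰 (𝓝 h) := hconv
    have hsmul : Tendsto (fun z : orbit G x => (σ z * g₀⁻¹) • (g₀ • x)) 𝒰
        (𝓝 (h • (g₀ • x))) := htend.smul tendsto_const_nhds
    have heq : (fun z : orbit G x => (σ z * g₀⁻¹) • (g₀ • x)) = fun z : orbit G x => (z : X) := by
      funext z
      rw [mul_smul, inv_smul_smul, hσ]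
    rw [heq] at hsmul
    have hx : h • (g₀ • x) = g₀ • x := tendsto_nhds_unique hsmul hcoe
    set τ : orbit G x → G := fun z => σ z * g₀⁻¹ * (h⁻¹ * g₀) with hτdef
    have htendτ : Tendsto τ 𝒰 (𝓝 g₀) := by
      have := htend.mul (tendsto_const_nhds (x := h⁻¹ * g₀))
      simpa [mul_inv_cancel_left] using this
    have hτx : ∀ z : orbit G x, τ z • x = (z : X) := by
      intro z
      have hinv : h⁻¹ • (g₀ • x) = g₀ • x := by
        rw [← hx, inv_smul_smul, hx]
      have hstep : τ z • x = σ z • (g₀⁻¹ • (h⁻¹ • (g₀ • x))) := by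
        simp only [hτdef, mul_smul]
      rw [hstep, hinv, inv_smul_smul, hσ]
    have hτS : {z : orbit G x | τ z ∈ S} ∈ 𝒰 := htendτ hS
    have himg : {z : orbit G x | τ z ∈ S} ⊆ φ '' S := by
      intro z hz
      exact ⟨τ z, hz, Subtype.ext (hτx z)⟩
    exact (Ultrafilter.compl_mem_iff_notMem.mp h2) (mem_of_superset hτS himg)
  intro s hs
  exact mem_of_superset (key _ hs) (image_preimage_subset φ s)

theorem cartan_orbit_isClosed [T2Space X] (hC : IsCartan G X) (x : X) :
    IsClosed (MulAction.orbit G x) := by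
  classical
  refine isClosed_of_closure_subset ?_
  intro y hy
  have hne : (𝓝 y ⊓ 𝓟 (orbit G x)).NeBot := mem_closure_iff_clusterPt.mp hy
  set 𝒰 : Ultrafilter X := Ultrafilter.of (𝓝 y ⊓ 𝓟 (orbit G x)) with h𝒰def
  have h𝒰 : (𝒰 : Filter X) ≤ 𝓝 y ⊓ 𝓟 (orbit G x) := Ultrafilter.of_le _
  have h1 : Tendsto (id : X → X) 𝒰 (𝓝 y) := h𝒰.trans inf_le_left
  have h2 : orbit G x ∈ 𝒰 := le_principal_iff.mp (h𝒰.trans inf_le_right)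
  set σ : X → G := fun z => if h : z ∈ orbit G x then (mem_orbit_iff.mp h).choose else 1
    with hσdef
  have hσ : ∀ z ∈ orbit G x, σ z • x = z := by
    intro z hz
    simp only [hσdef, dif_pos hz]
    exact (mem_orbit_iff.mp hz).choose_spec
  obtain ⟨V, hV, hK⟩ := hC y
  have hVmem : V ∈ 𝒰 := (h𝒰.trans inf_le_left) hV
  have hW : V ∩ orbit G x ∈ 𝒰 := inter_mem hVmem h2
  obtain ⟨z₀, hz₀V, hz₀o⟩ := Ultrafilter.nonempty_of_mem hW
  obtain ⟨g₀, hg₀⟩ := mem_orbit_iff.mp hz₀o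
  have hsub : ∀ z ∈ V ∩ orbit G x, (σ z * g₀⁻¹) ∈ {g : G | ∃ v ∈ V, g • v ∈ V} := by
    rintro z ⟨hzV, hzo⟩
    refine ⟨z₀, hz₀V, ?_⟩
    rw [← hg₀, mul_smul, inv_smul_smul, hσ z hzo]
    exact hzV
  have hKmem : closure {g : G | ∃ v ∈ V, g • v ∈ V} ∈
      Ultrafilter.map (fun z => σ z * g₀⁻¹) 𝒰 := by
    rw [Ultrafilter.mem_map]
    exact mem_of_superset hW fun z hz => subset_closure (hsub z hz)
  obtain ⟨h, hhK, hconv⟩ := hK.ultrafilter_le_nhds _ (le_principal_iff.mpr hKmem)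
  have htend : Tendsto (fun z : X => σ z * g₀⁻¹) 𝒰 (𝓝 h) := hconv
  have hsmul : Tendsto (fun z : X => (σ z * g₀⁻¹) • z₀) 𝒰 (𝓝 (h • z₀)) :=
    htend.smul tendsto_const_nhds
  have heq : (fun z : X => (σ z * g₀⁻¹) • z₀) =ᶠ[(𝒰 : Filter X)] id := by
    filter_upwards [hW] with z hz
    rcases hz with ⟨hzV, hzo⟩
    show (σ z * g₀⁻¹) • z₀ = z
    rw [← hg₀, mul_smul, inv_smul_smul, hσ z hzo]
  have hsmul' : Tendsto (id : X → X) 𝒰 (𝓝 (h • z₀)) := hsmul.congr' heq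
  have : y = h • z₀ := tendsto_nhds_unique h1 hsmul'
  rw [this, ← hg₀, ← mul_smul]
  exact mem_orbit x (h * g₀)

theorem cartan_stabilizer_isCompact [T1Space X] (hC : IsCartan G X) (x : X) :
    IsCompact (MulAction.stabilizer G x : Set G) := by
  obtain ⟨V, hV, hK⟩ := hC x
  refine hK.of_isClosed_subset ?_ ?_
  · have : (MulAction.stabilizer G x : Set G) = (fun g : G => g • x) ⁻¹' {x} := by
      ext g
      simp [MulAction.mem_stabilizer_iff]
    rw [this]
    exact (isClosed_singleton).preimage (continuous_id.smul continuous_const)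
  · intro g hg
    refine subset_closure ⟨x, mem_of_mem_nhds hV, ?_⟩
    rw [show g • x = x from hg]
    exact mem_of_mem_nhds hV

end Aux

/-- Let `G` be a locally compact Hausdorff group and `X` a Tychonoff Cartan
`G`-space. Then for every `x ∈ X`: (1) the map `g ↦ g • x` is an open map of `G` onto the orbit
`G(x)`; (2) the orbit `G(x)` is closed, the stabilizer `G_x` is compact, and `G(x)` is
`G`-homeomorphic to `G / G_x`. -/
theorem statement4 {G X : Type*} [Group G] [TopologicalSpace G] [IsTopologicalGroup G]
    [LocallyCompactSpace G] [T2Space G]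
    [TopologicalSpace X] [MulAction G X] [ContinuousSMul G X] [T35Space X]
    (hC : IsCartan G X) (x : X) :
    IsOpenMap (fun g : G => (⟨g • x, MulAction.mem_orbit x g⟩ : MulAction.orbit G x)) ∧
    IsClosed (MulAction.orbit G x) ∧
    IsCompact (MulAction.stabilizer G x : Set G) ∧
    ∃ f : G ⧸ MulAction.stabilizer G x ≃ₜ MulAction.orbit G x,
      ∀ (g : G) (q : G ⧸ MulAction.stabilizer G x), (f (g • q) : X) = g • (f q : X) := by
  classical
  set φ : G → orbit G x := fun g => ⟨g • x, mem_orbit x g⟩ with hφdef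
  have hφc : Continuous φ :=
    Continuous.subtype_mk (continuous_id.smul continuous_const) _
  have hopen : IsOpenMap φ := cartan_orbitMap_isOpenMap hC x
  refine ⟨hopen, cartan_orbit_isClosed hC x, cartan_stabilizer_isCompact hC x, ?_⟩
  have hcong : ∀ a b : G, QuotientGroup.leftRel (MulAction.stabilizer G x) a b → φ a = φ b := by
    intro a b hab
    rw [QuotientGroup.leftRel_apply] at hab
    have : (a⁻¹ * b) • x = x := hab
    apply Subtype.ext
    show a • x = b • x
    calc a • x = a • ((a⁻¹ * b) • x) := by rw [this]
      _ = b • x := by rw [← mul_smul, mul_inv_cancel_left]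
  set f0 : G ⧸ MulAction.stabilizer G x → orbit G x :=
    fun q => Quotient.liftOn' q φ hcong with hf0def
  have hf0mk : ∀ g : G, f0 (QuotientGroup.mk g) = φ g := fun g => rfl
  have hf0cont : Continuous f0 := hφc.quotient_liftOn' hcong
  have hbij : Function.Bijective f0 := by
    constructor
    · intro a b hab
      induction a using Quotient.inductionOn' with | h a =>
      induction b using Quotient.inductionOn' with | h b =>
      rw [Quotient.eq'']
      have hab' : a • x = b • x := congrArg Subtype.val hab
      rw [QuotientGroup.leftRel_apply]
      show (a⁻¹ * b) • x = x
      rw [mul_smul, ← hab', inv_smul_smul]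
    · intro z
      obtain ⟨g, hg⟩ := mem_orbit_iff.mp z.2
      exact ⟨QuotientGroup.mk g, Subtype.ext hg⟩
  have hf0open : IsOpenMap f0 := by
    intro W hW
    have hWpre : IsOpen ((QuotientGroup.mk : G → G ⧸ MulAction.stabilizer G x) ⁻¹' W) :=
      hW.preimage continuous_quot_mk
    have himg : f0 '' W = φ '' ((QuotientGroup.mk : G → G ⧸ MulAction.stabilizer G x) ⁻¹' W) := by
      ext z
      constructor
      · rintro ⟨q, hq, rfl⟩
        induction q using Quotient.inductionOn' with | h a =>
        exact ⟨a, hq, rfl⟩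
      · rintro ⟨a, ha, rfl⟩
        exact ⟨QuotientGroup.mk a, ha, rfl⟩
    rw [himg]
    exact hopen _ hWpre
  set f : G ⧸ MulAction.stabilizer G x ≃ₜ MulAction.orbit G x :=
    IsHomeomorph.homeomorph f0 ⟨hf0cont, hf0open, hbij⟩ with hfdef
  refine ⟨f, ?_⟩
  intro g q
  refine QuotientGroup.induction_on q ?_
  intro a
  have h1 : g • (QuotientGroup.mk a : G ⧸ MulAction.stabilizer G x) = QuotientGroup.mk (g * a) :=
    rfl
  have h2 : ∀ b : G, (f (QuotientGroup.mk b) : X) = b • x := fun b => rfl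
  rw [h1, h2, h2, mul_smul]
end

section
/- Let G be a locally compact Hausdorff topological group and X a Tychonoff G-space. If X is a proper G-space in the sense of Palais, then the orbit space X/G is a Tychonoff (completely regular Hausdorff) space. -/
open Set Filter MulAction Topology

/-- From Palais properness: for any two points `z w`, there is a neighborhood `V` of `w`
such that the transporter `{g | g • z ∈ V}` is relatively compact. -/
theorem PalaisProper.aux {G X : Type*} [Group G] [TopologicalSpace G]
    [TopologicalSpace X] [MulAction G X]
    (hX : PalaisProper G X) (z w : X) :
    ∃ V ∈ 𝓝 w, IsCompact (closure {g : G | g • z ∈ V}) := by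
  obtain ⟨𝒰, -, hcov, hsmall⟩ := hX
  have hz : z ∈ ⋃₀ 𝒰 := by rw [hcov]; trivial
  obtain ⟨U, hU𝒰, hzU⟩ := hz
  obtain ⟨V, hV, hC⟩ := hsmall U hU𝒰 w
  refine ⟨V, hV, hC.of_isClosed_subset isClosed_closure (closure_mono ?_)⟩
  exact fun g hg => ⟨z, hzU, hg⟩

/-- Orbits of a Palais-proper action on a Hausdorff space are closed. -/
theorem PalaisProper.isClosed_orbit {G X : Type*} [Group G] [TopologicalSpace G]
    [TopologicalSpace X] [MulAction G X] [ContinuousSMul G X] [T2Space X]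
    (hX : PalaisProper G X) (x : X) : IsClosed (MulAction.orbit G x) := by
  rw [← closure_subset_iff_isClosed]
  intro y hy
  obtain ⟨V, hV, hC⟩ := hX.aux x y
  set φ : G → X := fun g => g • x with hφ
  set F : Filter G := Filter.comap φ (𝓝 y) with hF
  have hFne : F.NeBot := by
    rw [hF, Filter.comap_neBot_iff]
    intro t ht
    obtain ⟨u, hu, g, hg⟩ := mem_closure_iff_nhds.mp hy t ht
    exact ⟨g, by rw [show φ g = u from hg]; exact hu⟩
  have hFle : F ≤ 𝓟 (closure {g : G | g • x ∈ V}) := by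
    refine le_principal_iff.mpr ?_
    exact Filter.mem_of_superset (Filter.preimage_mem_comap hV) subset_closure
  obtain ⟨g₀, -, hg₀⟩ := hC hFle
  haveI : (𝓝 g₀ ⊓ F).NeBot := hg₀
  have hcont : Continuous φ := continuous_id.smul continuous_const
  have h1 : Filter.Tendsto φ (𝓝 g₀ ⊓ F) (𝓝 (g₀ • x)) :=
    (hcont.tendsto g₀).mono_left inf_le_left
  have h2 : Filter.Tendsto φ (𝓝 g₀ ⊓ F) (𝓝 y) :=
    tendsto_comap.mono_left inf_le_right
  have : g₀ • x = y := tendsto_nhds_unique h1 h2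
  exact this ▸ MulAction.mem_orbit x g₀

/-- If `G` is a locally compact Hausdorff group and `X` a Tychonoff `G`-space
which is proper in the sense of Palais, then the orbit space `X/G` is Tychonoff. -/
theorem statement5 {G X : Type*} [Group G] [TopologicalSpace G] [IsTopologicalGroup G]
    [LocallyCompactSpace G] [T2Space G]
    [TopologicalSpace X] [MulAction G X] [ContinuousSMul G X] [T35Space X]
    (hX : PalaisProper G X) :
    T35Space (Quotient (MulAction.orbitRel G X)) := by
  set Q := Quotient (MulAction.orbitRel G X)
  set π : X → Q := Quotient.mk _ with hπ
  have hqm : IsQuotientMap π := isQuotientMap_quotient_mk'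
  have hpre : ∀ x : X, π ⁻¹' {π x} = MulAction.orbit G x := by
    intro x
    ext y
    constructor
    · intro hy
      exact MulAction.orbitRel_apply.mp (Quotient.exact hy)
    · intro hy
      exact Quotient.sound (MulAction.orbitRel_apply.mpr hy)
  have hT1 : T1Space Q := by
    refine ⟨fun q => ?_⟩
    obtain ⟨x, rfl⟩ := Quotient.exists_rep q
    rw [← hqm.isClosed_preimage]
    show IsClosed (π ⁻¹' {π x})
    rw [hpre x]
    exact hX.isClosed_orbit x
  have hCR : CompletelyRegularSpace Q := by
    constructor
    intro q K hK hq
    obtain ⟨x, rfl⟩ := Quotient.exists_rep q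
    set A : Set X := π ⁻¹' K with hA
    have hAclosed : IsClosed A := hK.preimage hqm.continuous
    have hxA : x ∉ A := hq
    have hAinv : ∀ (g : G) (a : X), a ∈ A → g • a ∈ A := by
      intro g a ha
      have : π (g • a) = π a :=
        Quotient.sound (MulAction.orbitRel_apply.mpr (MulAction.mem_orbit a g))
      simpa [hA, Set.mem_preimage, this] using ha
    -- choose a small open set U containing x
    obtain ⟨𝒰, hop, hcov, hsm⟩ := hX
    have hx : x ∈ ⋃₀ 𝒰 := by rw [hcov]; trivial
    obtain ⟨U, hU𝒰, hxU⟩ := hx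
    have hUopen : IsOpen U := hop U hU𝒰
    have hUsmall : IsSmallSet G U := hsm U hU𝒰
    -- separate x from A ∪ Uᶜ in X
    have hclosed : IsClosed (A ∪ Uᶜ) := hAclosed.union hUopen.isClosed_compl
    have hxnot : x ∉ A ∪ Uᶜ := by
      rintro (h | h)
      · exact hxA h
      · exact h hxU
    obtain ⟨h₀, hh₀c, hh₀x, hh₀K⟩ :=
      CompletelyRegularSpace.completely_regular x (A ∪ Uᶜ) hclosed hxnot
    set h : X → ℝ := fun z => (h₀ z : ℝ) with hh
    have hhc : Continuous h := continuous_subtype_val.comp hh₀c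
    have hh0 : ∀ z, 0 ≤ h z := fun z => (h₀ z).2.1
    have hh1 : ∀ z, h z ≤ 1 := fun z => (h₀ z).2.2
    have hhx : h x = 0 := by simp [hh, hh₀x]
    have hhone : ∀ z ∈ A ∪ Uᶜ, h z = 1 := by
      intro z hz
      simp [hh, hh₀K hz]
    -- the invariant function
    set f : X → ℝ := fun z => ⨅ g : G, h (g • z) with hf
    have hbdd : ∀ z : X, BddBelow (Set.range fun g : G => h (g • z)) := by
      intro z
      exact ⟨0, by rintro t ⟨g, rfl⟩; exact hh0 _⟩
    have hf0 : ∀ z, 0 ≤ f z := fun z => le_ciInf fun g => hh0 _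
    have hfle : ∀ z, f z ≤ h z := by
      intro z
      have := ciInf_le (hbdd z) (1 : G)
      simpa using this
    have hf1 : ∀ z, f z ≤ 1 := fun z => (hfle z).trans (hh1 z)
    have hfx : f x = 0 := le_antisymm (by simpa [hhx] using hfle x) (hf0 x)
    have hfA : ∀ a ∈ A, f a = 1 := by
      intro a ha
      have : (fun g : G => h (g • a)) = fun _ => (1 : ℝ) := by
        funext g
        exact hhone _ (Or.inl (hAinv g a ha))
      rw [hf]
      simp only [this]
      exact ciInf_const
    have hfinv : ∀ (g : G) (z : X), f (g • z) = f z := by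
      intro g₀ z
      rw [hf]
      simp only
      rw [iInf, iInf]
      congr 1
      ext t
      constructor
      · rintro ⟨g, rfl⟩
        exact ⟨g * g₀, by simp [mul_smul]⟩
      · rintro ⟨g, rfl⟩
        exact ⟨g * g₀⁻¹, by simp [mul_smul]⟩
    -- continuity of f
    have hfc : Continuous f := by
      rw [continuous_iff_continuousAt]
      intro y
      obtain ⟨V, hV, hC⟩ := hUsmall y
      set T : Set G := {g : G | ∃ s ∈ U, g • s ∈ V} with hT
      set D : Set G := (closure T)⁻¹ ∪ {1} with hD
      have hDcomp : IsCompact D := hC.inv.union isCompact_singleton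
      have hDne : (1 : G) ∈ D := Or.inr rfl
      set F : X → ℝ := fun z => sInf ((fun g : G => h (g • z)) '' D) with hFdef
      have hFc : Continuous F := by
        apply IsCompact.continuous_sInf (f := fun (z : X) (g : G) => h (g • z)) hDcomp
        exact hhc.comp (continuous_snd.smul continuous_fst)
      have heq : ∀ z ∈ V, f z = F z := by
        intro z hz
        have hbddD : BddBelow ((fun g : G => h (g • z)) '' D) := by
          exact ⟨0, by rintro t ⟨g, -, rfl⟩; exact hh0 _⟩
        refine le_antisymm ?_ ?_
        · rw [hf]
          simp only
          rw [iInf]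
          exact csInf_le_csInf (hbdd z) ⟨h ((1 : G) • z), Set.mem_image_of_mem _ hDne⟩
            (Set.image_subset_range _ _)
        · refine le_ciInf fun g => ?_
          by_cases hgU : g • z ∈ U
          · have hgT : g⁻¹ ∈ T := ⟨g • z, hgU, by rwa [inv_smul_smul]⟩
            have hgD : g ∈ D := Or.inl (by simpa [Set.mem_inv] using subset_closure hgT)
            exact csInf_le hbddD (Set.mem_image_of_mem _ hgD)
          · have : h (g • z) = 1 := hhone _ (Or.inr hgU)
            rw [this]
            calc F z ≤ h ((1 : G) • z) := csInf_le hbddD (Set.mem_image_of_mem _ hDne)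
              _ ≤ 1 := by simpa using hh1 z
      exact hFc.continuousAt.congr
        (Filter.eventuallyEq_of_mem hV fun z hz => (heq z hz).symm)
    -- descend to the quotient
    have hresp : ∀ a b : X, (MulAction.orbitRel G X) a b → f a = f b := by
      intro a b hab
      obtain ⟨g, rfl⟩ := MulAction.orbitRel_apply.mp hab
      exact hfinv g b
    set fq : Q → ℝ := Quotient.lift f hresp with hfq
    have hfqc : Continuous fq := hqm.continuous_iff.mpr hfc
    have hfqmem : ∀ q : Q, fq q ∈ unitInterval := by
      intro q
      obtain ⟨a, rfl⟩ := Quotient.exists_rep q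
      exact ⟨hf0 a, hf1 a⟩
    refine ⟨fun q => ⟨fq q, hfqmem q⟩, hfqc.subtype_mk _, ?_, ?_⟩
    · exact Subtype.ext hfx
    · intro q hqK
      obtain ⟨a, rfl⟩ := Quotient.exists_rep q
      exact Subtype.ext (hfA a hqK)
  exact { toT0Space := hT1.t0Space, toCompletelyRegularSpace := hCR }
end

section
/- Let G be a topological group and X, Y be G-spaces. Assume {x_1,…,x_n} ⊆ X and {y_1,…,y_n} ⊆ Y are finite sets of points satisfying, for each i ∈ {1,…,n}: (A) the map θ_{x_i} : G → G(x_i), g ↦ g x_i, is open onto the orbit G(x_i) (with its subspace topology); (B) there exist a G-invariant open neighborhood U_i ⊆ X of G(x_i) and a continuous G-equivariant retraction r_i : U_i → G(x_i); (C) G_{x_i} ≤ G_{y_i}; and (D) G(x_i) ∩ G(x_j) = ∅ whenever i ≠ j. If, moreover, Y is G-equiconnected, the orbit space X/G is Tychonoff, and there exists at least one continuous G-equivariant map from X to Y, then there exists a continuous G-equivariant map ψ : X → Y such that ψ(x_i) = y_i for every i ∈ {1,…,n}. -/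
open MulAction Set unitInterval

/-- A `G`-space `Y` is `G`-equiconnected: there is a continuous map `h : Y × Y × [0,1] → Y`
with `h (a,b,0) = a`, `h (a,b,1) = b`, `h (a,a,t) = a` and `h (g•a, g•b, t) = g • h (a,b,t)`. -/
def GEquiconnected (G Y : Type*) [SMul G Y] [TopologicalSpace Y] : Prop :=
  ∃ h : Y × Y × unitInterval → Y, Continuous h ∧
    (∀ a b : Y, h (a, b, 0) = a) ∧ (∀ a b : Y, h (a, b, 1) = b) ∧
    (∀ (a : Y) (t : unitInterval), h (a, a, t) = a) ∧
    ∀ (g : G) (a b : Y) (t : unitInterval), h (g • a, g • b, t) = g • h (a, b, t)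

theorem step8 {G X Y : Type*} [Group G] [TopologicalSpace G] [IsTopologicalGroup G]
    [TopologicalSpace X] [MulAction G X] [ContinuousSMul G X]
    [TopologicalSpace Y] [MulAction G Y] [ContinuousSMul G Y]
    {n : ℕ} (x : Fin n → X) (y : Fin n → Y) (i : Fin n)
    (hA : IsOpenMap
      (fun g : G => (⟨g • x i, MulAction.mem_orbit (x i) g⟩ : MulAction.orbit G (x i))))
    (hB : ∃ U : Set X, IsOpen U ∧ (∀ (g : G), ∀ u ∈ U, g • u ∈ U) ∧
      MulAction.orbit G (x i) ⊆ U ∧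
      ∃ r : X → X, ContinuousOn r U ∧ (∀ z ∈ U, r z ∈ MulAction.orbit G (x i)) ∧
        (∀ z ∈ MulAction.orbit G (x i), r z = z) ∧
        ∀ (g : G), ∀ z ∈ U, r (g • z) = g • r z)
    (hC : MulAction.stabilizer G (x i) ≤ MulAction.stabilizer G (y i))
    (hD : ∀ j, j ≠ i → Disjoint (MulAction.orbit G (x i)) (MulAction.orbit G (x j)))
    (hY : GEquiconnected G Y)
    (hT : T35Space (Quotient (MulAction.orbitRel G X)))
    (φ : X → Y) (hφc : Continuous φ) (hφe : ∀ (g : G) (z : X), φ (g • z) = g • φ z) :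
    ∃ ψ : X → Y, Continuous ψ ∧ (∀ (g : G) (z : X), ψ (g • z) = g • ψ z) ∧
      ψ (x i) = y i ∧ ∀ j, j ≠ i → ψ (x j) = φ (x j) := by
  classical
  obtain ⟨U, hUo, hUinv, hUorb, r, hrc, hrorb, hrfix, hre⟩ := hB
  obtain ⟨h, hhc, h0, h1, hdiag, heq⟩ := hY
  -- the map F on the orbit
  set F : X → Y := fun z =>
    if hz : z ∈ MulAction.orbit G (x i) then (MulAction.mem_orbit_iff.mp hz).choose • y i
    else y i with hF
  have hFkey : ∀ g : G, F (g • x i) = g • y i := by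
    intro g
    have hz : g • x i ∈ MulAction.orbit G (x i) := MulAction.mem_orbit _ g
    have hc : (MulAction.mem_orbit_iff.mp hz).choose • x i = g • x i :=
      (MulAction.mem_orbit_iff.mp hz).choose_spec
    have hs : g⁻¹ * (MulAction.mem_orbit_iff.mp hz).choose ∈ MulAction.stabilizer G (x i) := by
      rw [MulAction.mem_stabilizer_iff, mul_smul, hc, inv_smul_smul]
    have := hC hs
    rw [MulAction.mem_stabilizer_iff, mul_smul] at this
    have : (MulAction.mem_orbit_iff.mp hz).choose • y i = g • y i := by
      calc (MulAction.mem_orbit_iff.mp hz).choose • y i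
          = g • g⁻¹ • (MulAction.mem_orbit_iff.mp hz).choose • y i := by rw [smul_inv_smul]
        _ = g • y i := by rw [this]
    simp only [hF, dif_pos hz, this]
  have hFe : ∀ (g : G), ∀ z ∈ MulAction.orbit G (x i), F (g • z) = g • F z := by
    rintro g z ⟨c, rfl⟩
    rw [← mul_smul, hFkey, hFkey, mul_smul]
  -- continuity of F on the orbit
  have hFcont : ContinuousOn F (MulAction.orbit G (x i)) := by
    rw [continuousOn_iff_continuous_restrict]
    have hq : Topology.IsQuotientMap (fun g : G =>
        (⟨g • x i, MulAction.mem_orbit (x i) g⟩ : MulAction.orbit G (x i))) := by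
      apply hA.isQuotientMap
      · exact Continuous.subtype_mk (continuous_id.smul continuous_const) _
      · rintro ⟨z, g, rfl⟩; exact ⟨g, rfl⟩
    rw [hq.continuous_iff]
    have : ((MulAction.orbit G (x i)).domRestrict F ∘ fun g : G =>
        (⟨g • x i, MulAction.mem_orbit (x i) g⟩ : MulAction.orbit G (x i)))
        = fun g : G => g • y i := by
      funext g; exact hFkey g
    rw [this]
    exact continuous_id.smul continuous_const
  -- the quotient map
  set π : X → Quotient (MulAction.orbitRel G X) := Quotient.mk _ with hπ
  have hπc : Continuous π := continuous_quot_mk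
  have hπinv : ∀ (g : G) (z : X), π (g • z) = π z := by
    intro g z
    exact Quotient.sound (MulAction.orbitRel_apply.mpr ⟨g, rfl⟩)
  have hπU : IsOpen (π '' U) := isOpenMap_quotient_mk'_mul U hUo
  have hπUmem : ∀ z : X, π z ∈ π '' U → z ∈ U := by
    rintro z ⟨u, hu, huz⟩
    have : z ∈ MulAction.orbit G u := MulAction.orbitRel_apply.mp (Quotient.exact huz.symm)
    obtain ⟨g, rfl⟩ := this
    exact hUinv g u hu
  -- the closed set K
  set K : Set (Quotient (MulAction.orbitRel G X)) :=
    (π '' U)ᶜ ∪ (⋃ j ∈ {j : Fin n | j ≠ i}, {π (x j)}) with hK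
  have hKclosed : IsClosed K := by
    apply IsClosed.union hπU.isClosed_compl
    exact (Set.Finite.biUnion (Set.toFinite _) (fun j _ => Set.finite_singleton _)).isClosed
  have hxiK : π (x i) ∉ K := by
    rintro (hmem | hmem)
    · exact hmem ⟨x i, hUorb (MulAction.mem_orbit_self _), rfl⟩
    · simp only [Set.mem_iUnion, Set.mem_singleton_iff] at hmem
      obtain ⟨j, hj, hij⟩ := hmem
      have : x i ∈ MulAction.orbit G (x j) := MulAction.orbitRel_apply.mp (Quotient.exact hij)
      exact Set.disjoint_left.mp (hD j hj) (MulAction.mem_orbit_self _) this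
  obtain ⟨f, hfc, hf0, hf1⟩ := CompletelyRegularSpace.completely_regular (π (x i)) K hKclosed hxiK
  -- the bump function μ
  set μ : X → unitInterval := fun z => projIcc (0:ℝ) 1 zero_le_one (1 - 2 * (f (π z) : ℝ))
    with hμ
  have hμc : Continuous μ := by
    apply continuous_projIcc.comp
    exact continuous_const.sub (continuous_const.mul
      (continuous_subtype_val.comp (hfc.comp hπc)))
  have hμinv : ∀ (g : G) (z : X), μ (g • z) = μ z := by
    intro g z; simp only [hμ, hπinv]
  have hμxi : μ (x i) = 1 := by
    simp only [hμ, hf0]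
    rw [projIcc_eq_one]
    norm_num
  have hμK : ∀ z : X, π z ∈ K → μ z = 0 := by
    intro z hz
    simp only [hμ]
    rw [projIcc_eq_zero]
    have : f (π z) = 1 := hf1 hz
    rw [this]
    norm_num
  -- the open set V
  set V : Set X := {z : X | (1:ℝ)/2 < (f (π z) : ℝ)} with hV
  have hVo : IsOpen V :=
    isOpen_lt continuous_const (continuous_subtype_val.comp (hfc.comp hπc))
  have hμV : ∀ z ∈ V, μ z = 0 := by
    intro z hz
    simp only [hμ]
    rw [projIcc_eq_zero]
    simp only [hV, Set.mem_setOf_eq] at hz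
    linarith
  have hUV : ∀ z : X, z ∉ U → z ∈ V := by
    intro z hz
    have : π z ∈ K := Or.inl (fun hmem => hz (hπUmem z hmem))
    have : f (π z) = 1 := hf1 this
    simp only [hV, Set.mem_setOf_eq, this]
    norm_num
  -- the new map
  set ψ : X → Y := fun z => if z ∈ U then h (φ z, F (r z), μ z) else φ z with hψ
  have hψV : ∀ z ∈ V, ψ z = φ z := by
    intro z hz
    simp only [hψ]
    split
    · rw [hμV z hz, h0]
    · rfl
  have hψU : ∀ z ∈ U, ψ z = h (φ z, F (r z), μ z) := fun z hz => if_pos hz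
  refine ⟨ψ, ?_, ?_, ?_, ?_⟩
  · rw [continuous_iff_continuousAt]
    intro z
    by_cases hz : z ∈ U
    · have hcong : ∀ᶠ w in nhds z, ψ w = h (φ w, F (r w), μ w) :=
        Filter.eventually_of_mem (hUo.mem_nhds hz) hψU
      have hFr : ContinuousOn (fun w => F (r w)) U :=
        hFcont.comp hrc (fun w hw => hrorb w hw)
      have hca : ContinuousAt (fun w => h (φ w, F (r w), μ w)) z :=
        hhc.continuousAt.comp (hφc.continuousAt.prodMk
          ((hFr.continuousAt (hUo.mem_nhds hz)).prodMk hμc.continuousAt))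
      exact hca.congr (hcong.mono fun w hw => hw.symm)
    · have hzV : z ∈ V := hUV z hz
      have hcong : ∀ᶠ w in nhds z, ψ w = φ w :=
        Filter.eventually_of_mem (hVo.mem_nhds hzV) hψV
      exact hφc.continuousAt.congr (Filter.EventuallyEq.symm hcong)
  · intro g z
    by_cases hz : z ∈ U
    · have hgz : g • z ∈ U := hUinv g z hz
      rw [hψU _ hgz, hψU _ hz, hφe, hre g z hz, hFe g _ (hrorb z hz), hμinv, heq]
    · have hgz : g • z ∉ U := fun hmem => hz (by
        have := hUinv g⁻¹ _ hmem
        rwa [inv_smul_smul] at this)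
      simp only [hψ, if_neg hz, if_neg hgz, hφe]
  · have hxiU : x i ∈ U := hUorb (MulAction.mem_orbit_self _)
    rw [hψU _ hxiU, hμxi, h1, hrfix _ (MulAction.mem_orbit_self _)]
    have : F (x i) = y i := by
      have := hFkey 1
      rwa [one_smul, one_smul] at this
    exact this
  · intro j hj
    by_cases hz : x j ∈ U
    · have hK' : π (x j) ∈ K := Or.inr (Set.mem_biUnion hj rfl)
      rw [hψU _ hz, hμK _ hK', h0]
    · simp only [hψ, if_neg hz]

/-- Let `G` be a topological group and `X`, `Y` `G`-spaces, and let
`x₁,…,xₙ ∈ X`, `y₁,…,yₙ ∈ Y` satisfy: (A) each map `g ↦ g • xᵢ` is open onto the orbit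
`G(xᵢ)`; (B) each orbit `G(xᵢ)` admits a `G`-invariant open neighborhood `Uᵢ` and a continuous
`G`-equivariant retraction `rᵢ : Uᵢ → G(xᵢ)`; (C) `G_{xᵢ} ≤ G_{yᵢ}`; (D) the orbits `G(xᵢ)`
are pairwise disjoint. If moreover `Y` is `G`-equiconnected, the orbit space `X/G` is
Tychonoff, and there is at least one continuous `G`-equivariant map `X → Y`, then there is a
continuous `G`-equivariant map `ψ : X → Y` with `ψ xᵢ = yᵢ` for all `i`. -/
theorem statement8 {G X Y : Type*} [Group G] [TopologicalSpace G] [IsTopologicalGroup G]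
    [TopologicalSpace X] [MulAction G X] [ContinuousSMul G X]
    [TopologicalSpace Y] [MulAction G Y] [ContinuousSMul G Y]
    (n : ℕ) (x : Fin n → X) (y : Fin n → Y)
    (hA : ∀ i, IsOpenMap
      (fun g : G => (⟨g • x i, MulAction.mem_orbit (x i) g⟩ : MulAction.orbit G (x i))))
    (hB : ∀ i, ∃ U : Set X, IsOpen U ∧ (∀ (g : G), ∀ u ∈ U, g • u ∈ U) ∧
      MulAction.orbit G (x i) ⊆ U ∧
      ∃ r : X → X, ContinuousOn r U ∧ (∀ z ∈ U, r z ∈ MulAction.orbit G (x i)) ∧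
        (∀ z ∈ MulAction.orbit G (x i), r z = z) ∧
        ∀ (g : G), ∀ z ∈ U, r (g • z) = g • r z)
    (hC : ∀ i, MulAction.stabilizer G (x i) ≤ MulAction.stabilizer G (y i))
    (hD : ∀ i j, i ≠ j → Disjoint (MulAction.orbit G (x i)) (MulAction.orbit G (x j)))
    (hY : GEquiconnected G Y)
    (hT : T35Space (Quotient (MulAction.orbitRel G X)))
    (hne : ∃ φ : X → Y, Continuous φ ∧ ∀ (g : G) (z : X), φ (g • z) = g • φ z) :
    ∃ ψ : X → Y, Continuous ψ ∧ (∀ (g : G) (z : X), ψ (g • z) = g • ψ z) ∧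
      ∀ i, ψ (x i) = y i := by

  obtain ⟨φ0, hφ0c, hφ0e⟩ := hne
  have key : ∀ k : ℕ, ∃ ψ : X → Y, Continuous ψ ∧ (∀ (g : G) (z : X), ψ (g • z) = g • ψ z) ∧
      ∀ j : Fin n, (j : ℕ) < k → ψ (x j) = y j := by
    intro k
    induction k with
    | zero => exact ⟨φ0, hφ0c, hφ0e, fun j hj => absurd hj (Nat.not_lt_zero _)⟩
    | succ k ih =>
      obtain ⟨ψ, hc, he, hv⟩ := ih
      by_cases hk : k < n
      · obtain ⟨ψ', hc', he', hvi, hvo⟩ := step8 x y ⟨k, hk⟩ (hA _) (hB _) (hC _)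
          (fun j hj => hD _ j (Ne.symm hj)) hY hT ψ hc he
        refine ⟨ψ', hc', he', fun j hj => ?_⟩
        by_cases hji : j = ⟨k, hk⟩
        · rw [hji]; exact hvi
        · rw [hvo j hji]
          exact hv j (by have := Fin.val_ne_of_ne hji; simp at this; omega)
      · exact ⟨ψ, hc, he, fun j hj => hv j (by omega)⟩
  obtain ⟨ψ, hc, he, hv⟩ := key n
  exact ⟨ψ, hc, he, fun i => hv i i.isLt⟩
end

section
/- Let n ≥ 1 and let 𝒦ⁿ₁₋ denote the space of all nonempty compact convex subsets of ℝⁿ of affine dimension at most 1 (i.e., all segments [c,d], including singletons), equipped with the Hausdorff metric and with the natural action of the group Aff(n) of invertible affine transformations given by (g,K) ↦ gK. Then the midpoint map ψ : 𝒦ⁿ₁₋ → ℝⁿ defined by ψ([c,d]) = (c+d)/2 is continuous and Aff(n)-equivariant, and it is the unique continuous Aff(n)-equivariant map from 𝒦ⁿ₁₋ to ℝⁿ. -/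
/-- The affine dimension of a subset of `ℝⁿ`: the dimension of its affine span. -/
noncomputable def affDim {n : ℕ} (s : Set (EuclideanSpace ℝ (Fin n))) : ℕ :=
  Module.finrank ℝ (affineSpan ℝ s).direction

/-- The space `𝒦ⁿ₁₋` of all nonempty compact convex subsets of `ℝⁿ` of affine dimension at
most `1` (segments, possibly degenerate), with the Hausdorff metric. -/
abbrev SegSpace (n : ℕ) :=
  {K : ConvexBody (EuclideanSpace ℝ (Fin n)) // affDim (K : Set (EuclideanSpace ℝ (Fin n))) ≤ 1}

lemma exists_seg {n : ℕ} (K : SegSpace n) : ∃ c d : EuclideanSpace ℝ (Fin n),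
    (K.1 : Set (EuclideanSpace ℝ (Fin n))) = segment ℝ c d := by
  obtain ⟨p₀, hp₀⟩ := K.1.nonempty
  have hcol : Collinear ℝ (K.1 : Set (EuclideanSpace ℝ (Fin n))) := by
    rw [collinear_iff_finrank_le_one]
    have h2 := K.2
    unfold affDim at h2
    rwa [direction_affineSpan] at h2
  obtain ⟨v, hv⟩ := (collinear_iff_of_mem hp₀).1 hcol
  by_cases hv0 : v = 0
  · refine ⟨p₀, p₀, ?_⟩
    rw [segment_same]
    apply Set.eq_singleton_iff_unique_mem.2
    refine ⟨hp₀, fun x hx => ?_⟩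
    obtain ⟨r, hr⟩ := hv x hx
    simpa [hv0] using hr
  · set S : Set ℝ := {t | t • v + p₀ ∈ (K.1 : Set (EuclideanSpace ℝ (Fin n)))} with hSdef
    have hmap : Continuous fun t : ℝ => t • v + p₀ := by continuity
    have hSclosed : IsClosed S := K.1.isCompact.isClosed.preimage hmap
    obtain ⟨C, hC⟩ := (Bornology.IsBounded.exists_norm_le K.1.isCompact.isBounded
      (E := EuclideanSpace ℝ (Fin n)))
    have hSbd : Bornology.IsBounded S := by
      have : S ⊆ Set.Icc (-((C + ‖p₀‖)/‖v‖)) ((C + ‖p₀‖)/‖v‖) := by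
        intro t ht
        have h1 : ‖t • v‖ ≤ C + ‖p₀‖ := by
          have := hC _ ht
          calc ‖t • v‖ = ‖(t • v + p₀) - p₀‖ := by rw [add_sub_cancel_right]
            _ ≤ ‖t • v + p₀‖ + ‖p₀‖ := norm_sub_le _ _
            _ ≤ C + ‖p₀‖ := by linarith
        rw [norm_smul] at h1
        have hvpos : (0:ℝ) < ‖v‖ := norm_pos_iff.2 hv0
        have : |t| ≤ (C + ‖p₀‖)/‖v‖ := by
          rw [le_div_iff₀ hvpos]; simpa using h1
        exact abs_le.1 this
      exact (Metric.isBounded_Icc _ _).subset this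
    have hScomp : IsCompact S := Metric.isCompact_of_isClosed_isBounded hSclosed hSbd
    have hSne : S.Nonempty := ⟨0, by simpa [hSdef] using hp₀⟩
    have hconv : Convex ℝ S := by
      intro t₁ h₁ t₂ h₂ a b ha hb hab
      have hK := K.1.convex h₁ h₂ ha hb hab
      have heq : a • (t₁ • v + p₀) + b • (t₂ • v + p₀) = (a • t₁ + b • t₂) • v + p₀ := by
        have h0 : a • (t₁ • v + p₀) + b • (t₂ • v + p₀)
            = (a • t₁ + b • t₂) • v + (a + b) • p₀ := by
          simp only [smul_eq_mul]; module
        rw [h0, hab, one_smul]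
      rw [heq] at hK
      exact hK
    set a := sInf S with ha
    set b := sSup S with hb
    have haS : a ∈ S := hScomp.sInf_mem hSne
    have hbS : b ∈ S := hScomp.sSup_mem hSne
    have hab : a ≤ b := csInf_le_csSup hSne hScomp.bddBelow hScomp.bddAbove
    have hSIcc : S = Set.Icc a b := by
      apply Set.Subset.antisymm
      · intro t ht
        exact ⟨csInf_le hScomp.bddBelow ht, le_csSup hScomp.bddAbove ht⟩
      · exact (convex_iff_ordConnected.1 hconv).out haS hbS
    have hKim : (K.1 : Set (EuclideanSpace ℝ (Fin n))) = (fun t : ℝ => t • v + p₀) '' S := by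
      apply Set.Subset.antisymm
      · intro x hx
        obtain ⟨r, hr⟩ := hv x hx
        rw [vadd_eq_add] at hr
        refine ⟨r, ?_, hr.symm⟩
        have : r ∈ S := by
          simp only [hSdef, Set.mem_setOf_eq]
          rw [← hr]; exact hx
        exact this
      · rintro x ⟨t, ht, rfl⟩; exact ht
    refine ⟨a • v + p₀, b • v + p₀, ?_⟩
    set f : ℝ →ᵃ[ℝ] EuclideanSpace ℝ (Fin n) := AffineMap.lineMap p₀ (v + p₀) with hf
    have hfap : ∀ t : ℝ, f t = t • v + p₀ := by
      intro t
      simp [hf, AffineMap.lineMap_apply, vsub_eq_sub, vadd_eq_add, add_sub_cancel_right]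
    have : (K.1 : Set (EuclideanSpace ℝ (Fin n))) = f '' segment ℝ a b := by
      rw [segment_eq_Icc hab, ← hSIcc, hKim]
      apply Set.image_congr
      intro t _; exact (hfap t).symm
    rw [this, image_segment, hfap, hfap]

lemma seg_coord {n : ℕ} (c d : EuclideanSpace ℝ (Fin n)) (i : Fin n) :
    sSup (⇑(EuclideanSpace.proj i (𝕜 := ℝ)) '' segment ℝ c d) = max (c i) (d i) ∧
    sInf (⇑(EuclideanSpace.proj i (𝕜 := ℝ)) '' segment ℝ c d) = min (c i) (d i) := by
  have him : ⇑(EuclideanSpace.proj i (𝕜 := ℝ)) '' segment ℝ c d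
      = segment ℝ (c i) (d i) := by
    have h := image_segment (𝕜 := ℝ)
      ((EuclideanSpace.proj i (𝕜 := ℝ)).toLinearMap.toAffineMap) c d
    simpa using h
  rw [him, segment_eq_Icc' , csSup_Icc min_le_max, csInf_Icc min_le_max]
  exact ⟨rfl, rfl⟩

lemma midpoint_wd {n : ℕ} {c d c' d' : EuclideanSpace ℝ (Fin n)}
    (h : segment ℝ c d = segment ℝ c' d') : midpoint ℝ c d = midpoint ℝ c' d' := by
  have hsum : c + d = c' + d' := by
    ext i
    have h1 := seg_coord c d i
    have h2 := seg_coord c' d' i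
    rw [h] at h1
    have hmax : max (c i) (d i) = max (c' i) (d' i) := by rw [← h1.1, h2.1]
    have hmin : min (c i) (d i) = min (c' i) (d' i) := by rw [← h1.2, h2.2]
    have hsum1 : c i + d i = c' i + d' i := by
      rw [← min_add_max (c i) (d i), ← min_add_max (c' i) (d' i), hmax, hmin]
    simpa using hsum1
  rw [midpoint_eq_smul_add, midpoint_eq_smul_add, hsum]

lemma sSup_image_le {n : ℕ} (f : EuclideanSpace ℝ (Fin n) →L[ℝ] ℝ)
    (K L : ConvexBody (EuclideanSpace ℝ (Fin n))) :
    sSup (⇑f '' (K : Set _)) ≤ sSup (⇑f '' (L : Set _)) + ‖f‖ * dist K L := by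
  obtain ⟨x, hxK, hfx⟩ := (K.isCompact.image f.continuous).sSup_mem (K.nonempty.image f)
  obtain ⟨y, hyL, hxy⟩ := L.isCompact.exists_infDist_eq_dist L.nonempty x
  have hinf : Metric.infDist x (L : Set _) ≤ dist K L := by
    rw [← ConvexBody.hausdorffDist_coe]
    exact Metric.infDist_le_hausdorffDist_of_mem hxK ConvexBody.hausdorffEdist_ne_top
  have hd : dist x y ≤ dist K L := by rw [← hxy]; exact hinf
  have h3 : f x - f y ≤ ‖f‖ * dist K L := by
    calc f x - f y = f (x - y) := by rw [map_sub]
      _ ≤ |f (x - y)| := le_abs_self _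
      _ ≤ ‖f‖ * ‖x - y‖ := by simpa [Real.norm_eq_abs] using f.le_opNorm (x - y)
      _ = ‖f‖ * dist x y := by rw [dist_eq_norm]
      _ ≤ ‖f‖ * dist K L := mul_le_mul_of_nonneg_left hd (norm_nonneg f)
  have h4 : f y ≤ sSup (⇑f '' (L : Set _)) :=
    le_csSup (L.isCompact.image f.continuous).bddAbove ⟨y, hyL, rfl⟩
  rw [← hfx]; linarith

lemma sInf_image_le {n : ℕ} (f : EuclideanSpace ℝ (Fin n) →L[ℝ] ℝ)
    (K L : ConvexBody (EuclideanSpace ℝ (Fin n))) :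
    sInf (⇑f '' (L : Set _)) ≤ sInf (⇑f '' (K : Set _)) + ‖f‖ * dist K L := by
  obtain ⟨x, hxK, hfx⟩ := (K.isCompact.image f.continuous).sInf_mem (K.nonempty.image f)
  obtain ⟨y, hyL, hxy⟩ := L.isCompact.exists_infDist_eq_dist L.nonempty x
  have hinf : Metric.infDist x (L : Set _) ≤ dist K L := by
    rw [← ConvexBody.hausdorffDist_coe]
    exact Metric.infDist_le_hausdorffDist_of_mem hxK ConvexBody.hausdorffEdist_ne_top
  have hd : dist x y ≤ dist K L := by rw [← hxy]; exact hinf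
  have h3 : f y - f x ≤ ‖f‖ * dist K L := by
    calc f y - f x = f (y - x) := by rw [map_sub]
      _ ≤ |f (y - x)| := le_abs_self _
      _ ≤ ‖f‖ * ‖y - x‖ := by simpa [Real.norm_eq_abs] using f.le_opNorm (y - x)
      _ = ‖f‖ * dist x y := by rw [dist_eq_norm, norm_sub_rev]
      _ ≤ ‖f‖ * dist K L := mul_le_mul_of_nonneg_left hd (norm_nonneg f)
  have h4 : sInf (⇑f '' (L : Set _)) ≤ f y :=
    csInf_le (L.isCompact.image f.continuous).bddBelow ⟨y, hyL, rfl⟩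
  rw [← hfx]; linarith

lemma lip_sSup {n : ℕ} (f : EuclideanSpace ℝ (Fin n) →L[ℝ] ℝ) :
    LipschitzWith ‖f‖₊ (fun K : ConvexBody (EuclideanSpace ℝ (Fin n)) =>
      sSup (⇑f '' (K : Set _))) :=
  LipschitzWith.of_dist_le_mul fun K L => by
    have h1 := sSup_image_le f K L
    have h2 := sSup_image_le f L K
    rw [dist_comm L K] at h2
    rw [Real.dist_eq, coe_nnnorm, abs_sub_le_iff]
    constructor <;> linarith

lemma lip_sInf {n : ℕ} (f : EuclideanSpace ℝ (Fin n) →L[ℝ] ℝ) :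
    LipschitzWith ‖f‖₊ (fun K : ConvexBody (EuclideanSpace ℝ (Fin n)) =>
      sInf (⇑f '' (K : Set _))) :=
  LipschitzWith.of_dist_le_mul fun K L => by
    have h1 := sInf_image_le f K L
    have h2 := sInf_image_le f L K
    rw [dist_comm L K] at h2
    rw [Real.dist_eq, coe_nnnorm, abs_sub_le_iff]
    constructor <;> linarith

noncomputable def psi {n : ℕ} (K : SegSpace n) : EuclideanSpace ℝ (Fin n) :=
  midpoint ℝ (exists_seg K).choose (exists_seg K).choose_spec.choose

lemma psi_mid {n : ℕ} (K : SegSpace n) (c d : EuclideanSpace ℝ (Fin n))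
    (h : (K.1 : Set (EuclideanSpace ℝ (Fin n))) = segment ℝ c d) :
    psi K = midpoint ℝ c d := by
  have hs := (exists_seg K).choose_spec.choose_spec
  exact midpoint_wd (hs.symm.trans h)

lemma psi_coord {n : ℕ} (K : SegSpace n) (i : Fin n) :
    psi K i = (sInf (⇑(EuclideanSpace.proj i (𝕜 := ℝ)) '' (K.1 : Set _))
      + sSup (⇑(EuclideanSpace.proj i (𝕜 := ℝ)) '' (K.1 : Set _))) / 2 := by
  obtain ⟨c, d, h⟩ := exists_seg K
  rw [psi_mid K c d h, h, (seg_coord c d i).1, (seg_coord c d i).2, min_add_max]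
  have : midpoint ℝ c d = (2⁻¹ : ℝ) • (c + d) := by
    rw [midpoint_eq_smul_add, invOf_eq_inv]
  rw [this]
  simp [PiLp.smul_apply, PiLp.add_apply, smul_eq_mul]
  ring

/-- For `n ≥ 1`, the midpoint map `ψ : 𝒦ⁿ₁₋ → ℝⁿ`, `ψ [c,d] = (c+d)/2`, is
continuous and `Aff(n)`-equivariant, and it is the unique continuous `Aff(n)`-equivariant map
from `𝒦ⁿ₁₋` to `ℝⁿ`. -/
theorem statement11 (n : ℕ) (hn : 1 ≤ n) :
    ∃ ψ : SegSpace n → EuclideanSpace ℝ (Fin n),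
      (Continuous ψ ∧
        (∀ (g : EuclideanSpace ℝ (Fin n) ≃ᵃ[ℝ] EuclideanSpace ℝ (Fin n)) (K L : SegSpace n),
          (L.1 : Set (EuclideanSpace ℝ (Fin n))) = g '' (K.1 : Set (EuclideanSpace ℝ (Fin n))) →
          ψ L = g (ψ K)) ∧
        (∀ (K : SegSpace n) (c d : EuclideanSpace ℝ (Fin n)),
          (K.1 : Set (EuclideanSpace ℝ (Fin n))) = segment ℝ c d → ψ K = midpoint ℝ c d)) ∧
      ∀ ψ' : SegSpace n → EuclideanSpace ℝ (Fin n), Continuous ψ' →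
        (∀ (g : EuclideanSpace ℝ (Fin n) ≃ᵃ[ℝ] EuclideanSpace ℝ (Fin n)) (K L : SegSpace n),
          (L.1 : Set (EuclideanSpace ℝ (Fin n))) = g '' (K.1 : Set (EuclideanSpace ℝ (Fin n))) →
          ψ' L = g (ψ' K)) →
        ψ' = ψ := by
  have hinj : Function.Injective (fun x : EuclideanSpace ℝ (Fin n) => (2:ℕ) • x) := by
    intro x y hxy
    have h2 : (2:ℝ) • x = (2:ℝ) • y := by
      have := hxy
      simp only [two_nsmul] at this
      rw [two_smul, two_smul]
      exact this
    exact smul_right_injective _ two_ne_zero h2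
  refine ⟨psi, ⟨?_, ?_, fun K c d h => psi_mid K c d h⟩, ?_⟩
  · -- continuity
    have h1 : Continuous fun K : SegSpace n => (fun i => psi K i : Fin n → ℝ) := by
      apply continuous_pi
      intro i
      have heq : (fun K : SegSpace n => psi K i)
          = fun K => (sInf (⇑(EuclideanSpace.proj i (𝕜 := ℝ)) '' (K.1 : Set _))
            + sSup (⇑(EuclideanSpace.proj i (𝕜 := ℝ)) '' (K.1 : Set _))) / 2 :=
        funext fun K => psi_coord K i
      rw [heq]
      have hS : Continuous fun K : SegSpace n =>
          sSup (⇑(EuclideanSpace.proj i (𝕜 := ℝ)) '' (K.1 : Set _)) :=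
        (lip_sSup (EuclideanSpace.proj i (𝕜 := ℝ))).continuous.comp continuous_subtype_val
      have hI : Continuous fun K : SegSpace n =>
          sInf (⇑(EuclideanSpace.proj i (𝕜 := ℝ)) '' (K.1 : Set _)) :=
        (lip_sInf (EuclideanSpace.proj i (𝕜 := ℝ))).continuous.comp continuous_subtype_val
      exact (hI.add hS).div_const 2
    have hdecomp : psi (n := n)
        = ⇑(EuclideanSpace.equiv (Fin n) ℝ).symm ∘ fun K => (fun i => psi K i : Fin n → ℝ) := by
      funext K
      rfl
    rw [hdecomp]
    exact (EuclideanSpace.equiv (Fin n) ℝ).symm.continuous.comp h1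
  · -- equivariance
    intro g K L hL
    obtain ⟨c, d, h⟩ := exists_seg K
    have hL2 : (L.1 : Set (EuclideanSpace ℝ (Fin n))) = segment ℝ (g c) (g d) := by
      rw [hL, h]
      have := image_segment ℝ g.toAffineMap c d
      simpa using this
    rw [psi_mid L _ _ hL2, psi_mid K c d h, AffineEquiv.map_midpoint]
  · -- uniqueness
    intro ψ' _ hequiv
    funext K
    obtain ⟨c, d, h⟩ := exists_seg K
    set m := midpoint ℝ c d with hm
    set g := AffineEquiv.pointReflection ℝ m with hg
    have hKK : (K.1 : Set (EuclideanSpace ℝ (Fin n))) = ⇑g '' (K.1 : Set _) := by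
      rw [h]
      have h1 : ⇑g '' segment ℝ c d = segment ℝ (g c) (g d) := by
        have := image_segment ℝ g.toAffineMap c d
        simpa using this
      rw [h1, hg, hm, AffineEquiv.pointReflection_midpoint_left,
        AffineEquiv.pointReflection_midpoint_right, segment_symm]
    have hfix := hequiv g K K hKK
    have : ψ' K = m :=
      (AffineEquiv.pointReflection_fixed_iff_of_injective_two_nsmul (k := ℝ) hinj).1 hfix.symm
    rw [this, psi_mid K c d h]
end

section
/- Let 𝒦² denote the space of all nonempty compact convex subsets of ℝ², equipped with the Hausdorff metric and the natural action of the group Aff(2) of invertible affine transformations of ℝ² given by (g,K) ↦ gK. Let T ⊆ ℝ² be the triangle with vertices (0,0), (1,0) and (0,1), and let b = (1/3, 1/3) be its centroid. Then there is no continuous Aff(2)-equivariant map ψ : 𝒦² → ℝ² with ψ(T) = b. -/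
/-- The point of `ℝ²` (as a Euclidean space) with the given coordinates. -/
noncomputable def pt2 (x y : ℝ) : EuclideanSpace ℝ (Fin 2) := (WithLp.equiv 2 (Fin 2 → ℝ)).symm ![x, y]

@[simp] lemma pt2_apply0 (x y : ℝ) : pt2 x y 0 = x := rfl
@[simp] lemma pt2_apply1 (x y : ℝ) : pt2 x y 1 = y := rfl

lemma pt2_ext (x y : ℝ) (v : EuclideanSpace ℝ (Fin 2)) (h0 : v 0 = x) (h1 : v 1 = y) :
    v = pt2 x y := by
  ext i
  fin_cases i
  · exact h0
  · exact h1

/-- the shear/scale linear map `(x,y) ↦ (x + t y, ε y)`. -/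
noncomputable def sh (t ε : ℝ) : EuclideanSpace ℝ (Fin 2) →ₗ[ℝ] EuclideanSpace ℝ (Fin 2) where
  toFun x := pt2 (x 0 + t * x 1) (ε * x 1)
  map_add' x y := by
    ext i
    fin_cases i <;> simp [pt2] <;> ring
  map_smul' c x := by
    ext i
    fin_cases i <;> simp [pt2] <;> ring

@[simp] lemma sh_apply (t ε : ℝ) (x : EuclideanSpace ℝ (Fin 2)) :
    sh t ε x = pt2 (x 0 + t * x 1) (ε * x 1) := rfl

/-- the shear/scale as a linear equivalence (for `ε ≠ 0`). -/
noncomputable def shE (t ε : ℝ) (hε : ε ≠ 0) :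
    EuclideanSpace ℝ (Fin 2) ≃ₗ[ℝ] EuclideanSpace ℝ (Fin 2) :=
  LinearEquiv.ofLinear (sh t ε) (sh (-t / ε) (1 / ε))
    (by
      apply LinearMap.ext
      intro x
      ext i
      fin_cases i <;> simp [pt2] <;> field_simp <;> ring)
    (by
      apply LinearMap.ext
      intro x
      ext i
      fin_cases i <;> simp [pt2] <;> field_simp <;> ring)

@[simp] lemma shE_apply (t ε : ℝ) (hε : ε ≠ 0) (x : EuclideanSpace ℝ (Fin 2)) :
    shE t ε hε x = pt2 (x 0 + t * x 1) (ε * x 1) := rfl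

/-- The triangle with vertices `(0,0)`, `(1,0)`, `(t,ε)` as a convex body. -/
noncomputable def tri (t ε : ℝ) : ConvexBody (EuclideanSpace ℝ (Fin 2)) :=
  ⟨convexHull ℝ {pt2 0 0, pt2 1 0, pt2 t ε}, convex_convexHull ℝ _,
    ((Set.finite_singleton _).insert _ |>.insert _).isCompact_convexHull (𝕜 := ℝ),
    convexHull_nonempty_iff.2 ⟨pt2 0 0, by simp⟩⟩

lemma tri_coe (t ε : ℝ) :
    (tri t ε : Set (EuclideanSpace ℝ (Fin 2))) = convexHull ℝ {pt2 0 0, pt2 1 0, pt2 t ε} := rfl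

/-- The segment from `(0,0)` to `(1,0)` as a convex body. -/
noncomputable def seg : ConvexBody (EuclideanSpace ℝ (Fin 2)) :=
  ⟨convexHull ℝ {pt2 0 0, pt2 1 0}, convex_convexHull ℝ _,
    ((Set.finite_singleton _).insert _).isCompact_convexHull (𝕜 := ℝ),
    convexHull_nonempty_iff.2 ⟨pt2 0 0, by simp⟩⟩

lemma seg_coe : (seg : Set (EuclideanSpace ℝ (Fin 2))) = convexHull ℝ {pt2 0 0, pt2 1 0} := rfl

lemma mem_seg_of (s : ℝ) (h0 : 0 ≤ s) (h1 : s ≤ 1) :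
    pt2 s 0 ∈ convexHull ℝ ({pt2 0 0, pt2 1 0} : Set (EuclideanSpace ℝ (Fin 2))) := by
  rw [convexHull_pair, segment_eq_image]
  refine ⟨s, ⟨h0, h1⟩, ?_⟩
  show (1 - s) • pt2 0 0 + s • pt2 1 0 = pt2 s 0
  ext i
  fin_cases i <;> simp [pt2]

lemma tri_coord_bounds (t ε : ℝ) (ht0 : 0 ≤ t) (ht1 : t ≤ 1) (hε : 0 ≤ ε)
    (x : EuclideanSpace ℝ (Fin 2)) (hx : x ∈ (tri t ε : Set (EuclideanSpace ℝ (Fin 2)))) :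
    (0 ≤ x 0 ∧ x 0 ≤ 1) ∧ (0 ≤ x 1 ∧ x 1 ≤ ε) := by
  have hconv : Convex ℝ {y : EuclideanSpace ℝ (Fin 2) |
      (0 ≤ y 0 ∧ y 0 ≤ 1) ∧ (0 ≤ y 1 ∧ y 1 ≤ ε)} := by
    intro a ha b hb p q hp hq hpq
    have h0 : (p • a + q • b) 0 = p * a 0 + q * b 0 := rfl
    have h1 : (p • a + q • b) 1 = p * a 1 + q * b 1 := rfl
    refine ⟨⟨?_, ?_⟩, ?_, ?_⟩
    · rw [h0]; nlinarith [ha.1.1, hb.1.1]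
    · rw [h0]; nlinarith [ha.1.2, hb.1.2]
    · rw [h1]; nlinarith [ha.2.1, hb.2.1]
    · rw [h1]; nlinarith [ha.2.2, hb.2.2]
  have := convexHull_min (s := {pt2 0 0, pt2 1 0, pt2 t ε}) ?_ hconv
  · exact this hx
  · rintro y (rfl | rfl | rfl) <;> refine ⟨⟨?_, ?_⟩, ?_, ?_⟩ <;> simp [ht0, ht1, hε]

lemma dist_pt2 (a b c d : ℝ) : dist (pt2 a b) (pt2 c d) = Real.sqrt ((a - c) ^ 2 + (b - d) ^ 2) := by
  rw [EuclideanSpace.dist_eq, Fin.sum_univ_two]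
  simp [Real.dist_eq, sq_abs]

lemma dist_tri_seg (t ε : ℝ) (ht0 : 0 ≤ t) (ht1 : t ≤ 1) (hε : 0 ≤ ε) :
    dist (tri t ε) seg ≤ ε := by
  rw [← ConvexBody.hausdorffDist_coe]
  apply Metric.hausdorffDist_le_of_mem_dist hε
  · intro x hx
    obtain ⟨⟨hx00, hx01⟩, hx10, hx11⟩ := tri_coord_bounds t ε ht0 ht1 hε x hx
    refine ⟨pt2 (x 0) 0, mem_seg_of _ hx00 hx01, ?_⟩
    have hx' : x = pt2 (x 0) (x 1) := pt2_ext _ _ _ rfl rfl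
    rw [hx', dist_pt2]
    simp only [pt2_apply0, pt2_apply1, sub_self, sub_zero]
    rw [show (0:ℝ) ^ 2 = 0 by norm_num, zero_add, Real.sqrt_sq hx10]
    exact hx11
  · intro y hy
    refine ⟨y, ?_, by simp [hε]⟩
    rw [tri_coe]
    exact convexHull_mono (by intro z hz; rcases hz with rfl | rfl <;> simp) hy

lemma image_T (t ε : ℝ) (hε : ε ≠ 0) :
    ⇑(shE t ε hε).toAffineEquiv '' (convexHull ℝ {pt2 0 0, pt2 1 0, pt2 0 1})
      = (tri t ε : Set (EuclideanSpace ℝ (Fin 2))) := by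
  have hco : ⇑(shE t ε hε).toAffineEquiv = ⇑(sh t ε) := rfl
  rw [tri_coe, hco, (sh t ε).image_convexHull]
  congr 1
  rw [Set.image_insert_eq, Set.image_insert_eq, Set.image_singleton]
  congr 1 <;> [skip; congr 1] <;> simp

/-- Let `T ⊆ ℝ²` be the triangle with vertices `(0,0)`, `(1,0)`, `(0,1)`,
regarded as an element of the space `𝒦²` of nonempty compact convex subsets of `ℝ²` with the
Hausdorff metric, and let `b = (1/3, 1/3)` be its centroid. Then there is no continuous
`Aff(2)`-equivariant map `ψ : 𝒦² → ℝ²` with `ψ T = b`. -/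
theorem statement12 (T : ConvexBody (EuclideanSpace ℝ (Fin 2)))
    (hT : (T : Set (EuclideanSpace ℝ (Fin 2))) =
      convexHull ℝ {pt2 0 0, pt2 1 0, pt2 0 1}) :
    ¬ ∃ ψ : ConvexBody (EuclideanSpace ℝ (Fin 2)) → EuclideanSpace ℝ (Fin 2),
      Continuous ψ ∧
      (∀ (g : EuclideanSpace ℝ (Fin 2) ≃ᵃ[ℝ] EuclideanSpace ℝ (Fin 2))
        (A B : ConvexBody (EuclideanSpace ℝ (Fin 2))),
        (B : Set (EuclideanSpace ℝ (Fin 2))) = g '' (A : Set (EuclideanSpace ℝ (Fin 2))) →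
        ψ B = g (ψ A)) ∧
      ψ T = pt2 (1/3) (1/3) := by
  rintro ⟨ψ, hcont, hequiv, hψT⟩
  have key : ∀ (t ε : ℝ) (hε : ε ≠ 0),
      ψ (tri t ε) = pt2 (1/3 + t * (1/3)) (ε * (1/3)) := by
    intro t ε hε
    have h := hequiv (shE t ε hε).toAffineEquiv T (tri t ε)
      (by rw [hT]; exact (image_T t ε hε).symm)
    rw [h, hψT]
    show sh t ε (pt2 (1/3) (1/3)) = _
    rw [sh_apply]
    simp
  obtain ⟨δ, hδ, hδ'⟩ := Metric.continuous_iff.mp hcont seg (1/12) (by norm_num)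
  set ε := min (δ/2) 1 with hεdef
  have hε0 : 0 < ε := lt_min (by linarith) one_pos
  have hεδ : ε < δ := lt_of_le_of_lt (min_le_left _ _) (by linarith)
  have h0 := hδ' (tri 0 ε) (lt_of_le_of_lt (dist_tri_seg 0 ε le_rfl zero_le_one hε0.le) hεδ)
  have h1 := hδ' (tri 1 ε) (lt_of_le_of_lt (dist_tri_seg 1 ε zero_le_one le_rfl hε0.le) hεδ)
  rw [key 0 ε hε0.ne'] at h0
  rw [key 1 ε hε0.ne'] at h1
  have htri := dist_triangle (pt2 (1/3 + 0 * (1/3)) (ε * (1/3))) (ψ seg)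
    (pt2 (1/3 + 1 * (1/3)) (ε * (1/3)))
  rw [dist_comm (ψ seg)] at htri
  have hd : dist (pt2 (1/3 + 0 * (1/3)) (ε * (1/3))) (pt2 (1/3 + 1 * (1/3)) (ε * (1/3)))
      = 1/3 := by
    rw [dist_pt2,
      show ((1/3 + 0 * (1/3) : ℝ) - (1/3 + 1 * (1/3))) ^ 2
        + (ε * (1/3) - ε * (1/3)) ^ 2 = (1/3) ^ 2 by ring,
      Real.sqrt_sq (by norm_num)]
  rw [hd] at htri
  linarith
end
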